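/- Let n ≥ 2 and let (A, B) and (C, D) be two pairs of invertible symmetric (n+1)×(n+1) complex matrices such that both pairs of quadrics {Q_A, Q_B} and {Q_C, Q_D} have normal crossings. Then the two pairs have the same set of tangent hyperplanes, i.e. {u ∈ ℂ^{n+1} \ {0} : uᵀA⁻¹u = 0 and uᵀB⁻¹u = 0} = {u ∈ ℂ^{n+1} \ {0} : uᵀC⁻¹u = 0 and uᵀD⁻¹u = 0}, if and only if the pencils of dual quadrics coincide, i.e. the ℂ-linear span of {A⁻¹, B⁻¹} equals the ℂ-linear span of {C⁻¹, D⁻¹} inside the space of symmetric matrices. -/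

import Mathlib

open Matrix Module

namespace S7

variable {m : ℕ}


variable {m : ℕ}

/-- transpose adjoint identity for dot products -/
lemma dot_transpose (P : Matrix (Fin m) (Fin m) ℂ) (y z : Fin m → ℂ) :
    y ⬝ᵥ (Pᵀ *ᵥ z) = (P *ᵥ y) ⬝ᵥ z := by
  rw [Matrix.dotProduct_mulVec, Matrix.vecMul_transpose]

lemma quad_congr (P M : Matrix (Fin m) (Fin m) ℂ) (y : Fin m → ℂ) :
    (P *ᵥ y) ⬝ᵥ (M *ᵥ (P *ᵥ y)) = y ⬝ᵥ ((Pᵀ * M * P) *ᵥ y) := by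
  rw [← Matrix.mulVec_mulVec, ← Matrix.mulVec_mulVec, dot_transpose]

lemma quad_symm (M : Matrix (Fin m) (Fin m) ℂ) (hM : M.IsSymm) (x y : Fin m → ℂ) :
    x ⬝ᵥ (M *ᵥ y) = y ⬝ᵥ (M *ᵥ x) := by
  conv_lhs => rw [← hM.eq]
  rw [dot_transpose, dotProduct_comm]



def ev (i : Fin m) : Fin m → ℂ := Pi.single i 1

lemma quad_apply (M : Matrix (Fin m) (Fin m) ℂ) (a b c : ℂ) (i j k : Fin m) :
    (a • ev i + b • ev j + c • ev k) ⬝ᵥ (M *ᵥ (a • ev i + b • ev j + c • ev k)) =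
    a*a*M i i + b*b*M j j + c*c*M k k + a*b*(M i j + M j i) + a*c*(M i k + M k i)
      + b*c*(M j k + M k j) := by
  simp [ev, Matrix.mulVec_add, Matrix.mulVec_smul, dotProduct_add, add_dotProduct,
    smul_dotProduct, dotProduct_smul, Matrix.mulVec_single_one,
    single_dotProduct, smul_eq_mul]
  ring

lemma sqrt_exists (z : ℂ) : ∃ a : ℂ, a ^ 2 = z := IsAlgClosed.exists_pow_nat_eq z two_pos

lemma diag_span (hm : 3 ≤ m) (d : Fin m → ℂ) (hd : Function.Injective d)
    (M : Matrix (Fin m) (Fin m) ℂ) (hMs : M.IsSymm)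
    (h : ∀ v : Fin m → ℂ, v ⬝ᵥ v = 0 → v ⬝ᵥ (diagonal d *ᵥ v) = 0 → v ⬝ᵥ (M *ᵥ v) = 0) :
    ∃ α β : ℂ, M = α • (1 : Matrix (Fin m) (Fin m) ℂ) + β • diagonal d := by
  have key : ∀ i j k : Fin m, i ≠ j → i ≠ k → j ≠ k →
      M i j = 0 ∧ M i i * (d j - d k) + M j j * (d k - d i) + M k k * (d i - d j) = 0 := by
    intro i j k hij hik hjk
    obtain ⟨a, ha⟩ := sqrt_exists (d j - d k)
    obtain ⟨b, hb⟩ := sqrt_exists (d k - d i)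
    obtain ⟨c, hc⟩ := sqrt_exists (d i - d j)
    have ha0 : a ≠ 0 := fun h0 => sub_ne_zero.mpr (hd.ne hjk) (by rw [h0] at ha; simpa using ha.symm)
    have hb0 : b ≠ 0 := fun h0 => sub_ne_zero.mpr (hd.ne hik.symm) (by rw [h0] at hb; simpa using hb.symm)
    have hq : ∀ s t : ℂ, s ^ 2 = 1 → t ^ 2 = 1 →
        a*a*M i i + (s*b)*(s*b)*M j j + (t*c)*(t*c)*M k k + a*(s*b)*(M i j + M j i)
          + a*(t*c)*(M i k + M k i) + (s*b)*(t*c)*(M j k + M k j) = 0 := by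
      intro s t hs ht
      set v : Fin m → ℂ := a • ev i + (s*b) • ev j + (t*c) • ev k with hv
      have h1 : v ⬝ᵥ v = 0 := by
        have e := quad_apply (1 : Matrix (Fin m) (Fin m) ℂ) a (s*b) (t*c) i j k
        rw [Matrix.one_mulVec] at e
        rw [hv, e]
        simp only [Matrix.one_apply_eq, Matrix.one_apply_ne, Matrix.one_apply_ne' , hij, hik, hjk,
          Ne, not_false_iff, Matrix.one_apply_ne hij, Matrix.one_apply_ne hik,
          Matrix.one_apply_ne hjk, Matrix.one_apply_ne' hij, Matrix.one_apply_ne' hik,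
          Matrix.one_apply_ne' hjk]
        linear_combination ha + hb + hc + b*b*hs + c*c*ht
      have h2 : v ⬝ᵥ (diagonal d *ᵥ v) = 0 := by
        rw [hv, quad_apply]
        simp only [Matrix.diagonal_apply_eq, Matrix.diagonal_apply_ne _ hij,
          Matrix.diagonal_apply_ne _ hik, Matrix.diagonal_apply_ne _ hjk,
          Matrix.diagonal_apply_ne' _ hij, Matrix.diagonal_apply_ne' _ hik,
          Matrix.diagonal_apply_ne' _ hjk]
        linear_combination d i * ha + d j * hb + d k * hc + d j * (b*b)*hs + d k * (c*c)*ht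
      have hE := h v h1 h2
      rw [hv, quad_apply] at hE
      exact hE
    have e1 := hq 1 1 (by norm_num) (by norm_num)
    have e2 := hq 1 (-1) (by norm_num) (by norm_num)
    have e3 := hq (-1) 1 (by norm_num) (by norm_num)
    have e4 := hq (-1) (-1) (by norm_num) (by norm_num)
    constructor
    · have hcross : a*b*(M i j + M j i) = 0 := by
        linear_combination (e1 + e2) / 2 - (e1+e2+e3+e4)/4
      have h0 : M i j + M j i = 0 := by
        rcases mul_eq_zero.mp hcross with h' | h'
        · exact absurd h' (mul_ne_zero ha0 hb0)
        · exact h'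
      have hsy : M j i = M i j := hMs.apply i j
      linear_combination (h0 - hsy)/2
    · linear_combination (e1+e2+e3+e4)/4 - M i i * ha - M j j * hb - M k k * hc
  -- assembly
  have h01 : (⟨0, by omega⟩ : Fin m) ≠ ⟨1, by omega⟩ := by simp [Fin.ext_iff]
  set i0 : Fin m := ⟨0, by omega⟩ with hi0
  set i1 : Fin m := ⟨1, by omega⟩ with hi1
  have hdne : d i1 - d i0 ≠ 0 := sub_ne_zero.mpr (hd.ne h01.symm)
  set β : ℂ := (M i1 i1 - M i0 i0) / (d i1 - d i0) with hβ
  set α : ℂ := M i0 i0 - β * d i0 with hα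
  have third : ∀ i j : Fin m, ∃ k, k ≠ i ∧ k ≠ j := by
    intro i j
    have hcompl : ({i, j} : Finset (Fin m))ᶜ.Nonempty := by
      rw [← Finset.card_pos, Finset.card_compl]
      have h2 : ({i, j} : Finset (Fin m)).card ≤ 2 := Finset.card_insert_le i {j}
      simp only [Fintype.card_fin]
      omega
    obtain ⟨k, hk⟩ := hcompl
    simp only [Finset.mem_compl, Finset.mem_insert, Finset.mem_singleton, not_or] at hk
    exact ⟨k, hk.1, hk.2⟩
  have hoff : ∀ i j : Fin m, i ≠ j → M i j = 0 := by
    intro i j hij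
    obtain ⟨k, hki, hkj⟩ := third i j
    exact (key i j k hij (Ne.symm hki) (Ne.symm hkj)).1
  have hdiag : ∀ kk : Fin m, M kk kk = α + β * d kk := by
    intro kk
    by_cases h0 : kk = i0
    · rw [h0, hα]; ring
    by_cases h1 : kk = i1
    · rw [h1, hα, hβ]; field_simp; ring
    · have hrel := (key i0 i1 kk h01 (Ne.symm h0) (Ne.symm h1)).2
      rw [hα, hβ]
      field_simp
      linear_combination -hrel
  refine ⟨α, β, ?_⟩
  ext i j
  by_cases hij : i = j
  · subst hij
    simp [Matrix.one_apply_eq, Matrix.diagonal_apply_eq, hdiag i]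
  · simp [Matrix.one_apply_ne hij, Matrix.diagonal_apply_ne _ hij, hoff i j hij]

/-- entries of a congruence product -/
lemma colq (P M : Matrix (Fin m) (Fin m) ℂ) (i j : Fin m) :
    (Pᵀ * M * P) i j = (fun r => P r i) ⬝ᵥ (M *ᵥ fun r => P r j) := by
  simp only [Matrix.mul_apply, Matrix.transpose_apply, dotProduct, Matrix.mulVec,
    Finset.sum_mul, Finset.mul_sum]
  rw [Finset.sum_comm]
  apply Finset.sum_congr rfl
  intro k _
  apply Finset.sum_congr rfl
  intro l _
  ring

lemma exists_congr_one (A : Matrix (Fin m) (Fin m) ℂ) (hAs : A.IsSymm) (hA : IsUnit A.det) :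
    ∃ P : Matrix (Fin m) (Fin m) ℂ, IsUnit P.det ∧ Pᵀ * A * P = 1 := by
  set BF := Matrix.toBilin' A with hBF
  have hBFs : BF.IsSymm := by
    constructor
    intro x y
    simp only [RingHom.id_apply, hBF, Matrix.toBilin'_apply']
    exact quad_symm A hAs x y
  have hBFnd : BF.Nondegenerate :=
    (Matrix.nondegenerate_of_det_ne_zero hA.ne_zero).toBilin'
  obtain ⟨v, hv⟩ := LinearMap.BilinForm.exists_orthogonal_basis (LinearMap.BilinForm.isSymm_iff.mp hBFs)
  let e : Fin (Module.finrank ℂ (Fin m → ℂ)) ≃ Fin m := finCongr (by rw [Module.finrank_fin_fun])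
  let b := v.reindex e
  have hbv : ∀ i, b i = v (e.symm i) := fun i => v.reindex_apply e i
  have hb : LinearMap.IsOrthoᵢ BF ⇑b := by
    intro i j hij
    show BF (b i) (b j) = 0
    rw [hbv, hbv]
    exact hv (fun hc => hij (by simpa using congrArg e hc))
  have hbnz : ∀ i, BF (b i) (b i) ≠ 0 :=
    fun i => LinearMap.BilinForm.iIsOrtho.not_isOrtho_basis_self_of_nondegenerate hb hBFnd i
  have hc : ∀ i : Fin m, ∃ c : ℂ, c ^ 2 = (BF (b i) (b i))⁻¹ := fun i => sqrt_exists _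
  choose c hcc using hc
  set P : Matrix (Fin m) (Fin m) ℂ := Matrix.of (fun r i => c i * b i r) with hP
  have hcol : ∀ i, (fun r => P r i) = c i • (b i : Fin m → ℂ) := by
    intro i; funext r; simp [hP, smul_eq_mul]
  have hPAP : Pᵀ * A * P = 1 := by
    ext i j
    rw [colq, hcol i, hcol j]
    have : (c i • (b i : Fin m → ℂ)) ⬝ᵥ (A *ᵥ (c j • (b j : Fin m → ℂ)))
        = (c i * c j) * BF (b i) (b j) := by
      rw [Matrix.mulVec_smul, smul_dotProduct, dotProduct_smul, hBF,
        Matrix.toBilin'_apply']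
      simp [smul_eq_mul]; ring
    rw [this]
    by_cases hij : i = j
    · subst hij
      rw [Matrix.one_apply_eq, ← sq, hcc i]
      exact inv_mul_cancel₀ (hbnz i)
    · rw [hb hij, Matrix.one_apply_ne hij, mul_zero]
  refine ⟨P, ?_, hPAP⟩
  have hdet : P.det * (A.det * P.det) = 1 := by
    have h1 := congrArg Matrix.det hPAP
    rw [Matrix.det_mul, Matrix.det_mul, Matrix.det_transpose, Matrix.det_one] at h1
    linear_combination h1
  exact IsUnit.of_mul_eq_one _ hdet

section OD
variable (B' : Matrix (Fin m) (Fin m) ℂ)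

/-- eigenvectors are anisotropic under the normal crossing condition -/
lemma aniso (hnc : ∀ y : Fin m → ℂ, y ≠ 0 → y ⬝ᵥ y = 0 → y ⬝ᵥ (B' *ᵥ y) = 0 →
      LinearIndependent ℂ ![y, B' *ᵥ y])
    (v : Fin m → ℂ) (μ : ℂ) (hv : v ≠ 0) (heig : B' *ᵥ v = μ • v) : v ⬝ᵥ v ≠ 0 := by
  intro hiso
  have h2 : v ⬝ᵥ (B' *ᵥ v) = 0 := by
    rw [heig, dotProduct_smul, hiso, smul_zero]
  have li := hnc v hv hiso h2
  rw [heig] at li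
  rw [linearIndependent_fin2] at li
  obtain ⟨h1, h3⟩ := li
  simp only [Matrix.cons_val_one, Matrix.head_cons, Matrix.cons_val_zero] at h1 h3
  by_cases hμ : μ = 0
  · exact h1 (by rw [hμ, zero_smul])
  · exact h3 μ⁻¹ (by rw [smul_smul, inv_mul_cancel₀ hμ, one_smul])

/-- two eigenvectors with the same eigenvalue are collinear -/
lemma colinear (hnc : ∀ y : Fin m → ℂ, y ≠ 0 → y ⬝ᵥ y = 0 → y ⬝ᵥ (B' *ᵥ y) = 0 →
      LinearIndependent ℂ ![y, B' *ᵥ y])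
    (v w : Fin m → ℂ) (μ : ℂ) (hv : v ≠ 0) (hev : B' *ᵥ v = μ • v) (hew : B' *ᵥ w = μ • w) :
    ∃ c : ℂ, w = c • v := by
  by_contra hno
  push_neg at hno
  set a := v ⬝ᵥ v with hadef
  have ha : a ≠ 0 := aniso B' hnc v μ hv hev
  set bb := v ⬝ᵥ w with hbdef
  set cc := w ⬝ᵥ w with hcdef
  obtain ⟨s, hs⟩ := sqrt_exists (bb^2 - a*cc)
  set u := (-bb + s) • v + a • w with hu
  have hu0 : u ≠ 0 := by
    intro h0
    apply hno (-(a⁻¹ * (-bb + s)))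
    have : a • w = -((-bb + s) • v) := by
      rw [eq_neg_iff_add_eq_zero, add_comm]; exact h0
    calc w = a⁻¹ • (a • w) := by rw [smul_smul, inv_mul_cancel₀ ha, one_smul]
    _ = a⁻¹ • (-((-bb + s) • v)) := by rw [this]
    _ = (-(a⁻¹ * (-bb + s))) • v := by rw [smul_neg, smul_smul, neg_smul]
  have heu : B' *ᵥ u = μ • u := by
    rw [hu, Matrix.mulVec_add, Matrix.mulVec_smul, Matrix.mulVec_smul, hev, hew,
      smul_add, smul_smul, smul_smul, smul_smul, smul_smul, mul_comm μ, mul_comm μ]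
  have hiso : u ⬝ᵥ u = 0 := by
    rw [hu]
    simp only [dotProduct_add, add_dotProduct, smul_dotProduct,
      dotProduct_smul, smul_eq_mul]
    rw [dotProduct_comm w v, ← hadef, ← hbdef, ← hcdef]
    linear_combination a * hs
  exact aniso B' hnc u μ hu0 heu hiso
end OD

lemma orthogonal_diag (B' : Matrix (Fin m) (Fin m) ℂ) (hsym : B'.IsSymm)
    (hnc : ∀ y : Fin m → ℂ, y ≠ 0 → y ⬝ᵥ y = 0 → y ⬝ᵥ (B' *ᵥ y) = 0 →
      LinearIndependent ℂ ![y, B' *ᵥ y]) :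
    ∃ (O : Matrix (Fin m) (Fin m) ℂ) (μ : Fin m → ℂ), Oᵀ * O = 1 ∧ Function.Injective μ ∧
      B' = O * diagonal μ * Oᵀ := by
  set f : Module.End ℂ (Fin m → ℂ) := Matrix.mulVecLin B' with hf
  have hfap : ∀ x, f x = B' *ᵥ x := fun x => rfl
  have hdim : ∀ μ : ℂ, finrank ℂ (f.eigenspace μ) ≤ 1 := by
    intro μ
    rw [finrank_le_one_iff]
    by_cases hE : f.eigenspace μ = ⊥
    · refine ⟨0, fun w => ⟨0, ?_⟩⟩
      have hw : (w : Fin m → ℂ) ∈ (⊥ : Submodule ℂ (Fin m → ℂ)) := by rw [← hE]; exact w.2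
      rw [Submodule.mem_bot] at hw
      apply Subtype.ext
      simp [hw]
    · obtain ⟨v, hvE, hv0⟩ := (Submodule.ne_bot_iff _).mp hE
      refine ⟨⟨v, hvE⟩, fun w => ?_⟩
      have hev : B' *ᵥ v = μ • v := Module.End.mem_eigenspace_iff.mp hvE
      have hew : B' *ᵥ (w : Fin m → ℂ) = μ • (w : Fin m → ℂ) :=
        Module.End.mem_eigenspace_iff.mp w.2
      obtain ⟨c, hc⟩ := colinear B' hnc v w μ hv0 hev hew
      exact ⟨c, Subtype.ext (by simp [hc])⟩
  set W : Submodule ℂ (Fin m → ℂ) := ⨆ μ : ℂ, f.eigenspace μ with hW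
  have hWinv : ∀ w ∈ W, f w ∈ W := by
    intro w hw
    refine Submodule.iSup_induction (motive := fun x => f x ∈ W) _ hw (fun μ x hx => ?_) ?_ ?_
    · have hx' : f x = μ • x := Module.End.mem_eigenspace_iff.mp hx
      show f x ∈ W
      rw [hx']
      exact (le_iSup f.eigenspace μ) (Submodule.smul_mem _ μ hx)
    · show f 0 ∈ W
      rw [map_zero]; exact W.zero_mem
    · intro x y hx hy
      show f (x + y) ∈ W
      rw [map_add]; exact W.add_mem hx hy
  have htop : W = ⊤ := by
    by_contra hWne
    set Bform : LinearMap.BilinForm ℂ (Fin m → ℂ) := Matrix.toBilin' 1 with hBform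
    have hBap : ∀ x y : Fin m → ℂ, Bform x y = x ⬝ᵥ y := by
      intro x y; rw [hBform, Matrix.toBilin'_apply', Matrix.one_mulVec]
    have hBnd : Bform.Nondegenerate :=
      (Matrix.nondegenerate_of_det_ne_zero
        (by simp : (1 : Matrix (Fin m) (Fin m) ℂ).det ≠ 0)).toBilin'
    have hBrefl : Bform.IsRefl := by
      intro x y hxy
      rw [hBap] at hxy ⊢
      rw [dotProduct_comm]; exact hxy
    set W' := Bform.orthogonal W with hW'
    have hfrk : finrank ℂ W' = m - finrank ℂ W := by
      rw [hW', LinearMap.BilinForm.finrank_orthogonal hBnd W, Module.finrank_fin_fun]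
    have hWlt : finrank ℂ W < m := by
      have := Submodule.finrank_lt (K := ℂ) (V := Fin m → ℂ) hWne
      rwa [Module.finrank_fin_fun] at this
    have hW'pos : 0 < finrank ℂ W' := by omega
    have : Nontrivial W' := Module.nontrivial_of_finrank_pos hW'pos
    have hinv : ∀ u ∈ W', f u ∈ W' := by
      intro u hu
      rw [hW', LinearMap.BilinForm.mem_orthogonal_iff]
      intro w hwW
      show Bform w (f u) = 0
      rw [hBap, hfap, quad_symm B' hsym w u, dotProduct_comm]
      have h0 : Bform (f w) u = 0 := (LinearMap.BilinForm.mem_orthogonal_iff.mp hu) (f w) (hWinv w hwW)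
      rw [hBap, hfap] at h0
      exact h0
    set g : Module.End ℂ W' := f.restrict hinv with hg
    obtain ⟨μ0, hμ0⟩ := Module.End.exists_eigenvalue g
    obtain ⟨x, hx⟩ := hμ0.exists_hasEigenvector
    have hgx : f (x : Fin m → ℂ) = μ0 • (x : Fin m → ℂ) := by
      have := hx.apply_eq_smul
      have h2 := congrArg (Subtype.val) this
      rw [hg] at h2
      simpa using h2
    have hv0 : (x : Fin m → ℂ) ≠ 0 := fun h => hx.2 (Subtype.ext h)
    have hvW : (x : Fin m → ℂ) ∈ W := by
      refine (le_iSup f.eigenspace μ0) ?_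
      exact Module.End.mem_eigenspace_iff.mpr hgx
    have hiso : (x : Fin m → ℂ) ⬝ᵥ (x : Fin m → ℂ) = 0 := by
      have h3 : Bform (x : Fin m → ℂ) (x : Fin m → ℂ) =  0 :=
        (LinearMap.BilinForm.mem_orthogonal_iff.mp x.2) (x : Fin m → ℂ) hvW
      rwa [hBap] at h3
    exact aniso B' hnc _ μ0 hv0 (by rw [← hfap, hgx]) hiso
  -- at least m distinct eigenvalues
  set s : Set ℂ := {μ | f.eigenspace μ ≠ ⊥} with hsdef
  have hsub : ∃ t : Finset ℂ, ↑t ⊆ s ∧ t.card = m := by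
    by_cases hfin : s.Finite
    · have hle : W ≤ ⨆ μ ∈ hfin.toFinset, f.eigenspace μ := by
        rw [hW]
        apply iSup_le
        intro μ
        by_cases hb : f.eigenspace μ = ⊥
        · rw [hb]; exact bot_le
        · exact le_biSup _ (hfin.mem_toFinset.mpr hb)
      have hbound : ∀ (t : Finset ℂ),
          finrank ℂ (⨆ μ ∈ t, f.eigenspace μ : Submodule ℂ (Fin m → ℂ)) ≤ t.card := by
        intro t
        induction t using Finset.induction_on with
        | empty => simp
        | @insert a t' ha ih =>
          rw [Finset.iSup_insert]
          calc finrank ℂ (f.eigenspace a ⊔ ⨆ μ ∈ t', f.eigenspace μ : Submodule ℂ (Fin m → ℂ))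
              ≤ finrank ℂ (f.eigenspace a)
                + finrank ℂ (⨆ μ ∈ t', f.eigenspace μ : Submodule ℂ (Fin m → ℂ)) :=
                Submodule.finrank_add_le_finrank_add_finrank _ _
            _ ≤ 1 + t'.card := add_le_add (hdim a) ih
            _ = (insert a t').card := by rw [Finset.card_insert_of_notMem ha]; omega
      have hm : m ≤ hfin.toFinset.card := by
        have h1 : m = finrank ℂ W := by
          rw [htop, finrank_top, Module.finrank_fin_fun]
        calc m = finrank ℂ W := h1
          _ ≤ finrank ℂ (⨆ μ ∈ hfin.toFinset, f.eigenspace μ : Submodule ℂ (Fin m → ℂ)) :=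
              Submodule.finrank_mono hle
          _ ≤ hfin.toFinset.card := hbound _
      obtain ⟨t, hts, htc⟩ := Finset.exists_subset_card_eq hm
      refine ⟨t, ?_, htc⟩
      intro x hx
      exact hfin.mem_toFinset.mp (hts hx)
    · obtain ⟨t, hts, htf, hcard⟩ := Set.Infinite.exists_subset_ncard_eq hfin m
      refine ⟨htf.toFinset, by simpa using hts, ?_⟩
      rw [Set.ncard_eq_toFinset_card _ htf] at hcard
      exact hcard
  obtain ⟨t, hts, htc⟩ := hsub
  set μs : Fin m → ℂ := fun i => ((t.equivFin.symm (finCongr htc.symm i)) : ℂ) with hμs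
  have hμinj : Function.Injective μs := by
    intro i j hij
    have h1 := Subtype.coe_injective hij
    have h2 := t.equivFin.symm.injective h1
    exact (finCongr htc.symm).injective h2
  have hμmem : ∀ i, f.eigenspace (μs i) ≠ ⊥ := by
    intro i
    exact hts (t.equivFin.symm (finCongr htc.symm i)).2
  -- eigenvectors
  have hev : ∀ i : Fin m, ∃ v : Fin m → ℂ, v ≠ 0 ∧ B' *ᵥ v = μs i • v := by
    intro i
    obtain ⟨v, hvE, hv0⟩ := (Submodule.ne_bot_iff _).mp (hμmem i)
    exact ⟨v, hv0, Module.End.mem_eigenspace_iff.mp hvE⟩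
  choose v hv0 hveig using hev
  have horth : ∀ i j : Fin m, i ≠ j → v i ⬝ᵥ v j = 0 := by
    intro i j hij
    have h1 : μs i * (v i ⬝ᵥ v j) = μs j * (v i ⬝ᵥ v j) := by
      calc μs i * (v i ⬝ᵥ v j) = (μs i • v i) ⬝ᵥ v j := by
            rw [smul_dotProduct]; simp [smul_eq_mul]
        _ = (B' *ᵥ v i) ⬝ᵥ v j := by rw [hveig i]
        _ = v j ⬝ᵥ (B' *ᵥ v i) := dotProduct_comm _ _
        _ = v i ⬝ᵥ (B' *ᵥ v j) := (quad_symm B' hsym (v i) (v j)).symm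
        _ = v i ⬝ᵥ (μs j • v j) := by rw [hveig j]
        _ = μs j * (v i ⬝ᵥ v j) := by rw [dotProduct_smul]; simp [smul_eq_mul]
    by_contra hne
    exact (hμinj.ne hij) (mul_right_cancel₀ hne h1)
  have haniso : ∀ i, v i ⬝ᵥ v i ≠ 0 := fun i => aniso B' hnc (v i) (μs i) (hv0 i) (hveig i)
  have hsq : ∀ i : Fin m, ∃ c : ℂ, c ^ 2 = (v i ⬝ᵥ v i)⁻¹ := fun i => sqrt_exists _
  choose c hc using hsq
  have hc0 : ∀ i, c i ≠ 0 := by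
    intro i h0
    have h1 := hc i
    rw [h0] at h1
    have h2 : ((v i ⬝ᵥ v i)⁻¹ : ℂ) = 0 := by simpa using h1.symm
    exact haniso i (inv_eq_zero.mp h2)
  set wv : Fin m → (Fin m → ℂ) := fun i => c i • v i with hwv
  have hwdot : ∀ i j, wv i ⬝ᵥ wv j = if i = j then 1 else 0 := by
    intro i j
    by_cases hij : i = j
    · subst hij
      simp only [hwv, smul_dotProduct, dotProduct_smul, smul_eq_mul, if_pos rfl]
      rw [← mul_assoc, ← sq, hc i]
      exact inv_mul_cancel₀ (haniso i)
    · simp only [hwv, smul_dotProduct, dotProduct_smul, smul_eq_mul, if_neg hij]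
      rw [horth i j hij]
      ring
  have hweig : ∀ i, B' *ᵥ wv i = μs i • wv i := by
    intro i
    rw [hwv]
    simp only [Matrix.mulVec_smul, hveig i, smul_smul, mul_comm]
  set O : Matrix (Fin m) (Fin m) ℂ := Matrix.of (fun r i => wv i r) with hO
  have h1 : Oᵀ * O = 1 := by
    ext i j
    have hent : (Oᵀ * O) i j = wv i ⬝ᵥ wv j := by
      simp [Matrix.mul_apply, dotProduct, hO]
    rw [hent, hwdot, Matrix.one_apply]
  have h2 : B' * O = O * diagonal μs := by
    ext r i
    have hL : (B' * O) r i = (B' *ᵥ wv i) r := by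
      simp [Matrix.mul_apply, Matrix.mulVec, dotProduct, hO]
    rw [hL, hweig i, Matrix.mul_diagonal]
    simp only [Pi.smul_apply, smul_eq_mul, hO, Matrix.of_apply]
    ring
  have hOO : O * Oᵀ = 1 := mul_eq_one_comm.mp h1
  refine ⟨O, μs, h1, hμinj, ?_⟩
  calc B' = B' * (O * Oᵀ) := by rw [hOO, Matrix.mul_one]
    _ = (B' * O) * Oᵀ := by rw [Matrix.mul_assoc]
    _ = (O * diagonal μs) * Oᵀ := by rw [h2]


lemma sim_diag (A B : Matrix (Fin m) (Fin m) ℂ) (hAs : A.IsSymm) (hBs : B.IsSymm)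
    (hA : IsUnit A.det) (hB : IsUnit B.det)
    (hnc : ∀ x : Fin m → ℂ, x ≠ 0 → x ⬝ᵥ (A *ᵥ x) = 0 → x ⬝ᵥ (B *ᵥ x) = 0 →
      LinearIndependent ℂ ![A *ᵥ x, B *ᵥ x]) :
    ∃ (T : Matrix (Fin m) (Fin m) ℂ) (e : Fin m → ℂ), IsUnit T.det ∧ Function.Injective e ∧
      A⁻¹ = T * Tᵀ ∧ B⁻¹ = T * diagonal e * Tᵀ := by
  obtain ⟨P, hPdet, hPAP⟩ := exists_congr_one A hAs hA
  have hPdet' : IsUnit Pᵀ.det := by rwa [Matrix.det_transpose]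
  have hPinj : Function.Injective (fun y => P *ᵥ y) :=
    Matrix.mulVec_injective_iff_isUnit.mpr ((Matrix.isUnit_iff_isUnit_det P).mpr hPdet)
  have hB''s : (Pᵀ * B * P).IsSymm := by
    show (Pᵀ * B * P)ᵀ = Pᵀ * B * P
    rw [Matrix.transpose_mul, Matrix.transpose_mul, Matrix.transpose_transpose, hBs.eq,
      ← Matrix.mul_assoc]
  have hnc'' : ∀ y : Fin m → ℂ, y ≠ 0 → y ⬝ᵥ y = 0 → y ⬝ᵥ ((Pᵀ * B * P) *ᵥ y) = 0 →
      LinearIndependent ℂ ![y, (Pᵀ * B * P) *ᵥ y] := by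
    intro y hy h1 h2
    have hx0 : P *ᵥ y ≠ 0 := fun h0 => hy (hPinj (show P *ᵥ y = P *ᵥ 0 by
      rw [h0, Matrix.mulVec_zero]))
    have hq1 : (P *ᵥ y) ⬝ᵥ (A *ᵥ (P *ᵥ y)) = 0 := by
      rw [quad_congr, hPAP, Matrix.one_mulVec]; exact h1
    have hq2 : (P *ᵥ y) ⬝ᵥ (B *ᵥ (P *ᵥ y)) = 0 := by
      rw [quad_congr]; exact h2
    have li := hnc (P *ᵥ y) hx0 hq1 hq2
    have e0 : Pᵀ *ᵥ (A *ᵥ (P *ᵥ y)) = y := by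
      rw [Matrix.mulVec_mulVec, Matrix.mulVec_mulVec, hPAP, Matrix.one_mulVec]
    have e1 : Pᵀ *ᵥ (B *ᵥ (P *ᵥ y)) = (Pᵀ * B * P) *ᵥ y := by
      rw [Matrix.mulVec_mulVec, Matrix.mulVec_mulVec]
    have hker : LinearMap.ker (Matrix.mulVecLin Pᵀ) = ⊥ :=
      LinearMap.ker_eq_bot.mpr
        (Matrix.mulVec_injective_iff_isUnit.mpr ((Matrix.isUnit_iff_isUnit_det Pᵀ).mpr hPdet'))
    have li2 := li.map' (Matrix.mulVecLin Pᵀ) hker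
    have hcomp : (⇑(Matrix.mulVecLin Pᵀ) ∘ ![A *ᵥ (P *ᵥ y), B *ᵥ (P *ᵥ y)])
        = ![y, (Pᵀ * B * P) *ᵥ y] := by
      funext z
      fin_cases z
      · exact e0
      · exact e1
    rwa [hcomp] at li2
  obtain ⟨O, μ, hO1, hμinj, hB''⟩ := orthogonal_diag (Pᵀ * B * P) hB''s hnc''
  have hOO : O * Oᵀ = 1 := mul_eq_one_comm.mp hO1
  have hOdet : IsUnit O.det := by
    have h1 := congrArg Matrix.det hOO
    rw [Matrix.det_mul, Matrix.det_one] at h1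
    exact IsUnit.of_mul_eq_one _ h1
  have hdetB'' : IsUnit (Pᵀ * B * P).det := by
    rw [Matrix.det_mul, Matrix.det_mul]
    exact (hPdet'.mul hB).mul hPdet
  have hdiageq : diagonal μ = Oᵀ * (Pᵀ * B * P) * O := by
    rw [hB'']
    simp only [← Matrix.mul_assoc]
    rw [hO1, Matrix.one_mul, Matrix.mul_assoc (diagonal μ) Oᵀ O, hO1, Matrix.mul_one]
  have hμ0 : ∀ i, μ i ≠ 0 := by
    have hdd : IsUnit (diagonal μ).det := by
      rw [hdiageq, Matrix.det_mul, Matrix.det_mul]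
      exact ((by rwa [Matrix.det_transpose] : IsUnit Oᵀ.det).mul hdetB'').mul hOdet
    rw [Matrix.det_diagonal] at hdd
    intro i hi
    exact hdd.ne_zero (Finset.prod_eq_zero (Finset.mem_univ i) hi)
  set e : Fin m → ℂ := fun i => (μ i)⁻¹ with he
  have heinj : Function.Injective e := fun i j hij => hμinj (by
    rw [← inv_inv (μ i), show (μ i)⁻¹ = (μ j)⁻¹ from hij, inv_inv])
  set T : Matrix (Fin m) (Fin m) ℂ := P * O with hT
  have hTdet : IsUnit T.det := by rw [hT, Matrix.det_mul]; exact hPdet.mul hOdet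
  have hTT : T * Tᵀ = P * Pᵀ := by
    rw [hT, Matrix.transpose_mul]
    simp only [← Matrix.mul_assoc]
    rw [Matrix.mul_assoc P O Oᵀ, hOO, Matrix.mul_one]
  have hleft : (P * Pᵀ) * A = 1 := by
    have h4 := congrArg (fun X => P * X * P⁻¹) hPAP
    simp only [← Matrix.mul_assoc] at h4
    rw [Matrix.mul_assoc (P * Pᵀ * A) P P⁻¹, Matrix.mul_nonsing_inv _ hPdet,
      Matrix.mul_one, Matrix.mul_one, Matrix.mul_nonsing_inv _ hPdet] at h4
    exact h4
  have hAinv : A⁻¹ = T * Tᵀ := by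
    rw [hTT]
    exact Matrix.inv_eq_left_inv hleft
  have hBinv : B⁻¹ = T * diagonal e * Tᵀ := by
    apply Matrix.inv_eq_left_inv
    have h5 : Pᵀ * B = (O * diagonal μ * Oᵀ) * P⁻¹ := by
      rw [← hB'', Matrix.mul_assoc (Pᵀ * B) P P⁻¹, Matrix.mul_nonsing_inv _ hPdet,
        Matrix.mul_one]
    have hde : diagonal e * diagonal μ = 1 := by
      rw [Matrix.diagonal_mul_diagonal]
      have h1 : (fun i => e i * μ i) = fun _ => (1 : ℂ) := by
        funext i
        simp only [he]
        exact inv_mul_cancel₀ (hμ0 i)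
      rw [h1, Matrix.diagonal_one]
    calc T * diagonal e * Tᵀ * B
        = P * O * diagonal e * Oᵀ * (Pᵀ * B) := by
          rw [hT, Matrix.transpose_mul]
          simp only [← Matrix.mul_assoc]
      _ = P * O * diagonal e * Oᵀ * (O * diagonal μ * Oᵀ * P⁻¹) := by rw [h5]
      _ = P * O * diagonal e * (Oᵀ * O) * diagonal μ * Oᵀ * P⁻¹ := by
          simp only [← Matrix.mul_assoc]
      _ = P * O * (diagonal e * diagonal μ) * Oᵀ * P⁻¹ := by
          rw [hO1, Matrix.mul_one]
          simp only [← Matrix.mul_assoc]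
      _ = P * (O * Oᵀ) * P⁻¹ := by
          rw [hde, Matrix.mul_one]
          simp only [← Matrix.mul_assoc]
      _ = 1 := by rw [hOO, Matrix.mul_one, Matrix.mul_nonsing_inv _ hPdet]
  exact ⟨T, e, hTdet, heinj, hAinv, hBinv⟩

lemma quad_mem_span {P Q M : Matrix (Fin m) (Fin m) ℂ}
    (hM : M ∈ Submodule.span ℂ ({P, Q} : Set (Matrix (Fin m) (Fin m) ℂ)))
    (u : Fin m → ℂ) (h1 : u ⬝ᵥ (P *ᵥ u) = 0) (h2 : u ⬝ᵥ (Q *ᵥ u) = 0) :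
    u ⬝ᵥ (M *ᵥ u) = 0 := by
  obtain ⟨a, b, hab⟩ := Submodule.mem_span_pair.mp hM
  rw [← hab, Matrix.add_mulVec, dotProduct_add, Matrix.smul_mulVec,
    Matrix.smul_mulVec, dotProduct_smul, dotProduct_smul, h1, h2,
    smul_zero, smul_zero, add_zero]

lemma mem_span_of_vanish (hm : 3 ≤ m) (T : Matrix (Fin m) (Fin m) ℂ) (hT : IsUnit T.det)
    (e : Fin m → ℂ) (he : Function.Injective e) (M : Matrix (Fin m) (Fin m) ℂ) (hMs : M.IsSymm)
    (hvan : ∀ u : Fin m → ℂ, u ⬝ᵥ ((T * Tᵀ) *ᵥ u) = 0 → u ⬝ᵥ ((T * diagonal e * Tᵀ) *ᵥ u) = 0 →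
      u ⬝ᵥ (M *ᵥ u) = 0) :
    ∃ α β : ℂ, M = α • (T * Tᵀ) + β • (T * diagonal e * Tᵀ) := by
  have hTt : IsUnit Tᵀ.det := by rwa [Matrix.det_transpose]
  set N := T⁻¹ * M * (T⁻¹)ᵀ with hN
  have hTN : T * N * Tᵀ = M := by
    rw [hN]
    simp only [← Matrix.mul_assoc]
    rw [Matrix.mul_nonsing_inv _ hT, Matrix.one_mul, Matrix.mul_assoc,
      ← Matrix.transpose_mul, Matrix.mul_nonsing_inv _ hT, Matrix.transpose_one,
      Matrix.mul_one]
  have hNs : N.IsSymm := by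
    show Nᵀ = N
    rw [hN, Matrix.transpose_mul, Matrix.transpose_mul, Matrix.transpose_transpose, hMs.eq,
      ← Matrix.mul_assoc]
  have hquad : ∀ (X : Matrix (Fin m) (Fin m) ℂ) (u : Fin m → ℂ),
      u ⬝ᵥ ((T * X * Tᵀ) *ᵥ u) = (Tᵀ *ᵥ u) ⬝ᵥ (X *ᵥ (Tᵀ *ᵥ u)) := by
    intro X u
    rw [quad_congr Tᵀ X u, Matrix.transpose_transpose]
  have hvanN : ∀ v : Fin m → ℂ, v ⬝ᵥ v = 0 → v ⬝ᵥ (diagonal e *ᵥ v) = 0 →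
      v ⬝ᵥ (N *ᵥ v) = 0 := by
    intro v h1 h2
    set u := (Tᵀ)⁻¹ *ᵥ v with hu
    have hv : Tᵀ *ᵥ u = v := by
      rw [hu, Matrix.mulVec_mulVec, Matrix.mul_nonsing_inv _ hTt, Matrix.one_mulVec]
    have hq1 : u ⬝ᵥ ((T * Tᵀ) *ᵥ u) = 0 := by
      have hx := hquad 1 u
      rw [Matrix.mul_one, hv, Matrix.one_mulVec] at hx
      rw [hx]; exact h1
    have hq2 : u ⬝ᵥ ((T * diagonal e * Tᵀ) *ᵥ u) = 0 := by
      have hx := hquad (diagonal e) u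
      rw [hv] at hx
      rw [hx]; exact h2
    have h3 := hvan u hq1 hq2
    have hx := hquad N u
    rw [hTN, hv] at hx
    rw [← hx]; exact h3
  obtain ⟨α, β, hαβ⟩ := diag_span hm e he N hNs hvanN
  refine ⟨α, β, ?_⟩
  rw [← hTN, hαβ, Matrix.mul_add, Matrix.add_mul]
  simp only [Matrix.mul_smul, Matrix.smul_mul, Matrix.mul_one]

end S7

open Matrix S7 in
/-- For `n ≥ 2` and two normal-crossing pairs of smooth quadrics
`{Q_A, Q_B}` and `{Q_C, Q_D}` in `P^n`, the two pairs have the same tangent hyperplanes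
iff the pencils of dual quadrics coincide, i.e. `span{A⁻¹, B⁻¹} = span{C⁻¹, D⁻¹}`. -/
theorem same_tangent_hyperplanes_iff_same_dual_pencil
    (n : ℕ) (hn : 2 ≤ n) (A B C D : Matrix (Fin (n+1)) (Fin (n+1)) ℂ)
    (hAs : A.IsSymm) (hBs : B.IsSymm) (hCs : C.IsSymm) (hDs : D.IsSymm)
    (hA : IsUnit A.det) (hB : IsUnit B.det) (hC : IsUnit C.det) (hD : IsUnit D.det)
    (hncAB : ∀ x : Fin (n+1) → ℂ, x ≠ 0 → x ⬝ᵥ (A *ᵥ x) = 0 → x ⬝ᵥ (B *ᵥ x) = 0 →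
      LinearIndependent ℂ ![A *ᵥ x, B *ᵥ x])
    (hncCD : ∀ x : Fin (n+1) → ℂ, x ≠ 0 → x ⬝ᵥ (C *ᵥ x) = 0 → x ⬝ᵥ (D *ᵥ x) = 0 →
      LinearIndependent ℂ ![C *ᵥ x, D *ᵥ x]) :
    ({u : Fin (n+1) → ℂ | u ≠ 0 ∧ u ⬝ᵥ (A⁻¹ *ᵥ u) = 0 ∧ u ⬝ᵥ (B⁻¹ *ᵥ u) = 0} =
      {u : Fin (n+1) → ℂ | u ≠ 0 ∧ u ⬝ᵥ (C⁻¹ *ᵥ u) = 0 ∧ u ⬝ᵥ (D⁻¹ *ᵥ u) = 0}) ↔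
    Submodule.span ℂ ({A⁻¹, B⁻¹} : Set (Matrix (Fin (n+1)) (Fin (n+1)) ℂ)) =
      Submodule.span ℂ ({C⁻¹, D⁻¹} : Set (Matrix (Fin (n+1)) (Fin (n+1)) ℂ)) := by
  have hm3 : 3 ≤ n + 1 := by omega
  have hAis : (A⁻¹).IsSymm := by
    show (A⁻¹)ᵀ = A⁻¹; rw [Matrix.transpose_nonsing_inv, hAs.eq]
  have hBis : (B⁻¹).IsSymm := by
    show (B⁻¹)ᵀ = B⁻¹; rw [Matrix.transpose_nonsing_inv, hBs.eq]
  have hCis : (C⁻¹).IsSymm := by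
    show (C⁻¹)ᵀ = C⁻¹; rw [Matrix.transpose_nonsing_inv, hCs.eq]
  have hDis : (D⁻¹).IsSymm := by
    show (D⁻¹)ᵀ = D⁻¹; rw [Matrix.transpose_nonsing_inv, hDs.eq]
  constructor
  · intro hset
    obtain ⟨T, e, hT, he, hAi, hBi⟩ := sim_diag A B hAs hBs hA hB hncAB
    obtain ⟨S, d, hS, hd, hCi, hDi⟩ := sim_diag C D hCs hDs hC hD hncCD
    have main1 : ∀ M : Matrix (Fin (n+1)) (Fin (n+1)) ℂ, M.IsSymm →
        (∀ u : Fin (n+1) → ℂ, u ⬝ᵥ (A⁻¹ *ᵥ u) = 0 → u ⬝ᵥ (B⁻¹ *ᵥ u) = 0 →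
          u ⬝ᵥ (M *ᵥ u) = 0) →
        M ∈ Submodule.span ℂ ({A⁻¹, B⁻¹} : Set (Matrix (Fin (n+1)) (Fin (n+1)) ℂ)) := by
      intro M hMs hvan
      obtain ⟨α, β, hαβ⟩ := mem_span_of_vanish hm3 T hT e he M hMs
        (fun u h1 h2 => hvan u (by rw [hAi]; exact h1) (by rw [hBi]; exact h2))
      exact Submodule.mem_span_pair.mpr ⟨α, β, by rw [hAi, hBi, ← hαβ]⟩
    have main2 : ∀ M : Matrix (Fin (n+1)) (Fin (n+1)) ℂ, M.IsSymm →
        (∀ u : Fin (n+1) → ℂ, u ⬝ᵥ (C⁻¹ *ᵥ u) = 0 → u ⬝ᵥ (D⁻¹ *ᵥ u) = 0 →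
          u ⬝ᵥ (M *ᵥ u) = 0) →
        M ∈ Submodule.span ℂ ({C⁻¹, D⁻¹} : Set (Matrix (Fin (n+1)) (Fin (n+1)) ℂ)) := by
      intro M hMs hvan
      obtain ⟨α, β, hαβ⟩ := mem_span_of_vanish hm3 S hS d hd M hMs
        (fun u h1 h2 => hvan u (by rw [hCi]; exact h1) (by rw [hDi]; exact h2))
      exact Submodule.mem_span_pair.mpr ⟨α, β, by rw [hCi, hDi, ← hαβ]⟩
    have hCmem : C⁻¹ ∈ Submodule.span ℂ ({A⁻¹, B⁻¹} :
        Set (Matrix (Fin (n+1)) (Fin (n+1)) ℂ)) := by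
      apply main1 _ hCis
      intro u h1 h2
      by_cases hu : u = 0
      · subst hu; rw [zero_dotProduct]
      · have hmem : u ∈ {u : Fin (n+1) → ℂ | u ≠ 0 ∧ u ⬝ᵥ (C⁻¹ *ᵥ u) = 0 ∧
            u ⬝ᵥ (D⁻¹ *ᵥ u) = 0} := by
          rw [← hset]; exact ⟨hu, h1, h2⟩
        exact hmem.2.1
    have hDmem : D⁻¹ ∈ Submodule.span ℂ ({A⁻¹, B⁻¹} :
        Set (Matrix (Fin (n+1)) (Fin (n+1)) ℂ)) := by
      apply main1 _ hDis
      intro u h1 h2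
      by_cases hu : u = 0
      · subst hu; rw [zero_dotProduct]
      · have hmem : u ∈ {u : Fin (n+1) → ℂ | u ≠ 0 ∧ u ⬝ᵥ (C⁻¹ *ᵥ u) = 0 ∧
            u ⬝ᵥ (D⁻¹ *ᵥ u) = 0} := by
          rw [← hset]; exact ⟨hu, h1, h2⟩
        exact hmem.2.2
    have hAmem : A⁻¹ ∈ Submodule.span ℂ ({C⁻¹, D⁻¹} :
        Set (Matrix (Fin (n+1)) (Fin (n+1)) ℂ)) := by
      apply main2 _ hAis
      intro u h1 h2
      by_cases hu : u = 0
      · subst hu; rw [zero_dotProduct]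
      · have hmem : u ∈ {u : Fin (n+1) → ℂ | u ≠ 0 ∧ u ⬝ᵥ (A⁻¹ *ᵥ u) = 0 ∧
            u ⬝ᵥ (B⁻¹ *ᵥ u) = 0} := by
          rw [hset]; exact ⟨hu, h1, h2⟩
        exact hmem.2.1
    have hBmem : B⁻¹ ∈ Submodule.span ℂ ({C⁻¹, D⁻¹} :
        Set (Matrix (Fin (n+1)) (Fin (n+1)) ℂ)) := by
      apply main2 _ hBis
      intro u h1 h2
      by_cases hu : u = 0
      · subst hu; rw [zero_dotProduct]
      · have hmem : u ∈ {u : Fin (n+1) → ℂ | u ≠ 0 ∧ u ⬝ᵥ (A⁻¹ *ᵥ u) = 0 ∧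
            u ⬝ᵥ (B⁻¹ *ᵥ u) = 0} := by
          rw [hset]; exact ⟨hu, h1, h2⟩
        exact hmem.2.2
    apply le_antisymm
    · rw [Submodule.span_le]
      intro X hX
      rcases hX with rfl | hX
      · exact hAmem
      · rw [Set.mem_singleton_iff] at hX; subst hX; exact hBmem
    · rw [Submodule.span_le]
      intro X hX
      rcases hX with rfl | hX
      · exact hCmem
      · rw [Set.mem_singleton_iff] at hX; subst hX; exact hDmem
  · intro hspan
    have hCmem : C⁻¹ ∈ Submodule.span ℂ ({A⁻¹, B⁻¹} :
        Set (Matrix (Fin (n+1)) (Fin (n+1)) ℂ)) := by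
      rw [hspan]; exact Submodule.subset_span (Set.mem_insert _ _)
    have hDmem : D⁻¹ ∈ Submodule.span ℂ ({A⁻¹, B⁻¹} :
        Set (Matrix (Fin (n+1)) (Fin (n+1)) ℂ)) := by
      rw [hspan]
      exact Submodule.subset_span (Set.mem_insert_iff.mpr (Or.inr rfl))
    have hAmem : A⁻¹ ∈ Submodule.span ℂ ({C⁻¹, D⁻¹} :
        Set (Matrix (Fin (n+1)) (Fin (n+1)) ℂ)) := by
      rw [← hspan]; exact Submodule.subset_span (Set.mem_insert _ _)
    have hBmem : B⁻¹ ∈ Submodule.span ℂ ({C⁻¹, D⁻¹} :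
        Set (Matrix (Fin (n+1)) (Fin (n+1)) ℂ)) := by
      rw [← hspan]
      exact Submodule.subset_span (Set.mem_insert_iff.mpr (Or.inr rfl))
    ext u
    simp only [Set.mem_setOf_eq]
    constructor
    · rintro ⟨h0, h1, h2⟩
      exact ⟨h0, quad_mem_span hCmem u h1 h2, quad_mem_span hDmem u h1 h2⟩
    · rintro ⟨h0, h1, h2⟩
      exact ⟨h0, quad_mem_span hAmem u h1 h2, quad_mem_span hBmem u h1 h2⟩
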